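/- No false negatives for path graphs: let G' = (V', E') be a path graph of a labeled graph G = (V, E) built from the k-collection S of maximal path labels of G, and let X be a nonempty pattern string containing neither # nor $. Then for every path P in G whose label equals X, the start node of P belongs to locate(X) = ⋃_{v' ∈ find(X)} value(v'), where find(X) is the set of nodes of G' that are start nodes of paths in G' labeled X. -/

import Mathlib

open List

/-- Two strings prefix-match if one is a prefix of the other. -/
def PrefixMatch {α : Type*} (s t : List α) : Prop := s <+: t ∨ t <+: s

/-- A set of strings is prefix-free if no two distinct members prefix-match. -/
def PrefixFree {α : Type*} (K : Set (List α)) : Prop :=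
  ∀ s ∈ K, ∀ t ∈ K, s ≠ t → ¬ PrefixMatch s t

/-- String `K` occurs at position `i` of the annotated sequence `s`
(an element of a `k`-collection, pairing each character with the graph node
at that position). -/
def OccAt {α ν : Type*} (s : List (α × ν)) (i : ℕ) (K : List α) : Prop :=
  i + K.length ≤ s.length ∧ ((s.drop i).take K.length).map Prod.fst = K

/-- An order-`k` path graph built from a `k`-collection `seqs` of annotated
sequences (labels of maximal paths, padded with `#^k` in front and `$^k`
behind, each position annotated with the corresponding node), together with a
prefix-free key set `keys` of substrings of length at most `k` such that every
right-maximal substring of the collection prefix-matches some key and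
`$^k` is a key. -/
structure PathGraph (α ν : Type*) (k : ℕ) (hash dollar : α) where
  seqs : Set (List (α × ν))
  keys : Set (List α)
  key_nonempty : ∀ K ∈ keys, K ≠ []
  key_short : ∀ K ∈ keys, K.length ≤ k
  prefixFree : PrefixFree keys
  keys_occur : ∀ K ∈ keys, ∃ s ∈ seqs, ∃ i, OccAt s i K
  suffixes_covered : ∀ s ∈ seqs, ∀ i < s.length,
      ∃ K ∈ keys, PrefixMatch K ((s.drop i).map Prod.fst)
  dollar_key : List.replicate k dollar ∈ keys
  begins_hash : ∀ s ∈ seqs, (s.map Prod.fst).take k = List.replicate k hash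
  ends_dollar : ∀ s ∈ seqs,
      (s.map Prod.fst).drop (s.length - k) = List.replicate k dollar
  no_other_special : ∀ s ∈ seqs, ∀ i, k ≤ i → i < s.length - k →
      ∀ h : i < s.length, (s.get ⟨i, h⟩).1 ≠ hash ∧ (s.get ⟨i, h⟩).1 ≠ dollar

namespace PathGraph

variable {α ν : Type*} [Inhabited α] {k : ℕ} {hash dollar : α}

/-- The value set of a key: the nodes at positions where the key occurs. -/
def value (G : PathGraph α ν k hash dollar) (K : List α) : Set ν :=
  { v | ∃ s ∈ G.seqs, ∃ i, OccAt s i K ∧ ∃ h : i < s.length, (s.get ⟨i, h⟩).2 = v }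

/-- Edges of the path graph: `(K, K')` is an edge when the string
`K[0]·K'` occurs in the collection and prefix-matches `K`. -/
def Edge (G : PathGraph α ν k hash dollar) (K K' : List α) : Prop :=
  K ∈ G.keys ∧ K' ∈ G.keys ∧
  (∃ s ∈ G.seqs, ∃ i, OccAt s i (K.headI :: K')) ∧
  PrefixMatch K (K.headI :: K')

/-- `find X`: the set of keys that are start nodes of paths of the path graph
whose label (concatenation of first characters of the keys) is `X`. -/
def find (G : PathGraph α ν k hash dollar) (X : List α) : Set (List α) :=
  { K | ∃ P : List (List α), P.Chain' G.Edge ∧ (∀ K' ∈ P, K' ∈ G.keys) ∧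
      P.map (fun K' => K'.headI) = X ∧ P.headI = K }

/-- `locate X`: the union of the value sets of the keys matching `X`. -/
def locate (G : PathGraph α ν k hash dollar) (X : List α) : Set ν :=
  ⋃ K ∈ G.find X, G.value K

/-- A path graph is the order-`k` de Bruijn graph of its collection when its
keys are exactly the `k`-mers occurring in the collection. -/
def IsDeBruijn (G : PathGraph α ν k hash dollar) : Prop :=
  G.keys = { K | K.length = k ∧ ∃ s ∈ G.seqs, ∃ i, OccAt s i K }

/-- Two path graphs are `k`-equivalent if `locate` agrees on all patterns of
length between `1` and `k` over `Σ \ {#, $}`. -/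
def KEquiv (G G' : PathGraph α ν k hash dollar) : Prop :=
  ∀ X : List α, X ≠ [] → X.length ≤ k →
    (∀ c ∈ X, c ≠ hash ∧ c ≠ dollar) → G.locate X = G'.locate X

/-- An order-`k` pruned de Bruijn graph: a path graph `k`-equivalent to the
order-`k` de Bruijn graph of the same collection. -/
def IsPrunedDeBruijn (G : PathGraph α ν k hash dollar) : Prop :=
  ∃ D : PathGraph α ν k hash dollar,
    D.seqs = G.seqs ∧ D.IsDeBruijn ∧ G.KEquiv D

/-- The pruning lemma is applicable: there is a nonempty string `K` that is a
proper prefix of at least one key, such that all keys having `K` as a proper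
prefix have identical value sets. -/
def CanPrune (G : PathGraph α ν k hash dollar) : Prop :=
  ∃ K : List α, K ≠ [] ∧
    (∃ K' ∈ G.keys, K <+: K' ∧ K ≠ K') ∧
    (∀ K₁ ∈ G.keys, K <+: K₁ → K ≠ K₁ →
      ∀ K₂ ∈ G.keys, K <+: K₂ → K ≠ K₂ → G.value K₁ = G.value K₂)

/-- A maximally pruned de Bruijn graph: a pruned de Bruijn graph to which the
pruning lemma cannot be applied any further. -/
def MaximallyPruned (G : PathGraph α ν k hash dollar) : Prop :=
  G.IsPrunedDeBruijn ∧ ¬ G.CanPrune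

end PathGraph

private lemma getElem_zero_eq_headI {β : Type*} [Inhabited β] (l : List β)
    (h : 0 < l.length) : l[0] = l.headI := by
  cases l with
  | nil => simp at h
  | cons a t => simp

private lemma prefixMatch_of_takes {α : Type*} (l : List α) {A B : List α} {m n : ℕ}
    (hA : A = l.take m) (hB : B = l.take n) : PrefixMatch A B := by
  subst hA hB
  rcases le_total m n with h | h
  · left
    rw [show l.take m = (l.take n).take m from by rw [List.take_take, min_eq_left h]]
    exact List.take_prefix _ _
  · right
    rw [show l.take n = (l.take m).take n from by rw [List.take_take, min_eq_left h]]
    exact List.take_prefix _ _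

/-- **No false negatives** (Lemma 1): if `G'` is a path graph of a labeled
graph `G = (V, E)` built from the `k`-collection of the labels of the maximal
paths of `G` (so that every nonempty path of `G` occurs, together with its
nodes, inside some annotated sequence of the collection), then for every
nonempty pattern `X` over `Σ \ {#, $}`, the start node of every path of `G`
labeled `X` belongs to `locate X`. -/
theorem no_false_negatives
    {α ν V : Type*} [Inhabited α] [Inhabited V] {k : ℕ} {hash dollar : α}
    (G' : PathGraph α ν k hash dollar)
    (lab : V → α) (E : V → V → Prop) (emb : V → ν)
    (hpaths : ∀ P : List V, P ≠ [] → P.Chain' E →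
      ∃ s ∈ G'.seqs, ∃ i : ℕ,
        (s.drop i).take P.length = P.map (fun v => (lab v, emb v)))
    (X : List α) (hX : X ≠ []) (hXc : ∀ c ∈ X, c ≠ hash ∧ c ≠ dollar) :
    ∀ P : List V, P.Chain' E → P.map lab = X →
      emb P.headI ∈ G'.locate X := by
  intro P hPchain hPlab
  classical
  have hPne : P ≠ [] := by
    intro h; subst h; exact hX hPlab.symm
  obtain ⟨s, hs, i, hd⟩ := hpaths P hPne hPchain
  set n := X.length with hn
  have hn1 : 1 ≤ n := by
    cases X with
    | nil => exact absurd rfl hX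
    | cons a t => simp [hn]
  have hPlen : P.length = n := by rw [hn, ← hPlab, List.length_map]
  have htl : ((s.drop i).take P.length).length = P.length := by
    rw [hd, List.length_map]
  have hilen : i + n ≤ s.length := by
    rw [List.length_take, List.length_drop, hPlen] at htl
    omega
  -- characters of X occur in s at positions i+j
  have hpair : ∀ j (hj : j < n),
      s[i+j]'(by omega) = (lab (P[j]'(by omega)), emb (P[j]'(by omega))) := by
    intro j hj
    have h1 : j < ((s.drop i).take P.length).length := by rw [htl]; omega
    have h2 := List.getElem_of_eq hd h1
    simpa [List.getElem_take, List.getElem_drop, List.getElem_map] using h2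
  have hcharX : ∀ j (hj : j < n), (s[i+j]'(by omega)).1 = X[j]'hj := by
    intro j hj
    have h1 : j < (P.map lab).length := by simpa [hPlen] using hj
    have h2 := List.getElem_of_eq hPlab h1
    simp only [List.getElem_map] at h2
    rw [hpair j hj]
    exact h2
  -- s ends with k dollars; since X has no dollars, occurrences avoid last k positions
  have hed := G'.ends_dollar s hs
  have hedlen : s.length - (s.length - k) = k := by
    have := congrArg List.length hed
    simpa using this
  have hrange : ∀ j < n, i + j < s.length - k := by
    intro j hj
    by_contra hcon
    push_neg at hcon
    have hij : i + j < s.length := by omega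
    have hidx : i + j - (s.length - k) < k := by omega
    have hdollar : (s[i+j]'hij).1 = dollar := by
      have h1 : (List.map Prod.fst s)[i+j]? = some dollar := by
        have h0 : (List.map Prod.fst s)[(s.length - k) + (i + j - (s.length - k))]? =
            some dollar := by
          rw [← List.getElem?_drop, hed, List.getElem?_replicate]
          simp [hidx]
        rwa [show s.length - k + (i + j - (s.length - k)) = i + j from by omega] at h0
      have h2 : (List.map Prod.fst s)[i+j]? = some (s[i+j]'hij).1 := by
        rw [List.getElem?_eq_getElem (by simpa using hij)]
        simp
      rw [h2] at h1
      exact Option.some_inj.mp h1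
    have := (hXc (X[j]'hj) (List.getElem_mem hj)).2
    rw [← hcharX j hj] at this
    exact this hdollar
  -- choose keys covering each suffix
  choose f hfk hfm using G'.suffixes_covered s hs
  -- main properties of chosen keys at positions before the dollar tail
  have main : ∀ p (hp' : p < s.length), p < s.length - k →
      OccAt s p (f p hp') ∧
      f p hp' = ((s.drop p).map Prod.fst).take (f p hp').length ∧
      (f p hp').headI = (s[p]'hp').1 := by
    intro p hp' hp
    have hKk := hfk p hp'
    have hlenK : (f p hp').length ≤ k := G'.key_short _ hKk
    have hKne : f p hp' ≠ [] := G'.key_nonempty _ hKk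
    have hsuflen : ((s.drop p).map Prod.fst).length = s.length - p := by simp
    have hpre : f p hp' <+: (s.drop p).map Prod.fst := by
      rcases hfm p hp' with h | h
      · exact h
      · exfalso
        have := h.length_le
        rw [hsuflen] at this
        omega
    have htake : ((s.drop p).map Prod.fst).take (f p hp').length = f p hp' := by
      obtain ⟨t, ht⟩ := hpre
      rw [← ht, List.take_left]
    refine ⟨⟨by omega, ?_⟩, htake.symm, ?_⟩
    · rw [List.map_take]; exact htake
    · obtain ⟨t, ht⟩ := hpre
      cases hK : f p hp' with
      | nil => exact absurd hK hKne
      | cons a K' =>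
        rw [hK] at ht
        have hdropc : s.drop p = (s[p]'hp') :: s.drop (p+1) :=
          List.drop_eq_getElem_cons hp'
        rw [hdropc] at ht
        simp only [List.map_cons, List.cons_append, List.cons.injEq] at ht
        simp [hK, ht.1]
  -- the path in the path graph
  have hflt : ∀ j : Fin n, i + (j : ℕ) < s.length := fun j => by
    have := j.isLt; omega
  set L : List (List α) := List.ofFn (fun j : Fin n => f (i + j) (hflt j)) with hL
  have hLlen : L.length = n := by simp [hL]
  have hLget : ∀ j (hj : j < n), L[j]'(by omega) = f (i + j) (by omega) := by
    intro j hj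
    simp [hL, List.getElem_ofFn]
  have hLne : L ≠ [] := by
    intro h
    rw [h] at hLlen
    simp at hLlen
    omega
  -- the key at position i
  have hmain0 : _ := main i (by have := hrange 0 (by omega); omega) (by have := hrange 0 (by omega); omega)
  -- membership in keys
  have hmemkeys : ∀ K' ∈ L, K' ∈ G'.keys := by
    intro K' hK'
    obtain ⟨j, hj, hjeq⟩ := List.getElem_of_mem hK'
    rw [hLlen] at hj
    rw [hLget j hj] at hjeq
    rw [← hjeq]
    exact hfk _ _
  -- chain of edges
  have hchain : L.Chain' G'.Edge := by
    rw [show L.Chain' G'.Edge ↔ L.IsChain G'.Edge from Iff.rfl, List.isChain_iff_getElem]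
    intro j hj
    rw [hLlen] at hj
    rw [hLget j (by omega), hLget (j+1) (by omega)]
    have hj1 : j < n := by omega
    have hj2 : j + 1 < n := by omega
    have hm1 := main (i + j) (by omega) (hrange j hj1)
    have hm2 := main (i + (j+1)) (by omega) (hrange (j+1) hj2)
    obtain ⟨hocc1, htk1, hhd1⟩ := hm1
    obtain ⟨hocc2, htk2, hhd2⟩ := hm2
    refine ⟨hfk _ _, hfk _ _, ?_, ?_⟩
    · -- occurrence of head :: K'
      refine ⟨s, hs, i + j, ?_, ?_⟩
      · have := hocc2.1
        simp only [List.length_cons]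
        omega
      · have hdropc : s.drop (i + j) = (s[i+j]'(by omega)) :: s.drop (i + j + 1) :=
          List.drop_eq_getElem_cons (by omega)
        rw [hdropc]
        simp only [List.length_cons, List.take_succ_cons, List.map_cons]
        refine List.cons_eq_cons.mpr ⟨hhd1.symm, ?_⟩
        exact hocc2.2
    · -- prefix match between K and head :: K'
      set suf := (s.drop (i + j)).map Prod.fst with hsuf
      have h2 : (f (i + j) (by omega : i + j < s.length)).headI :: f (i + (j+1)) (by omega : i + (j+1) < s.length) =
          suf.take ((f (i + (j+1)) (by omega : i + (j+1) < s.length)).length + 1) := by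
        have hdropc : s.drop (i + j) = (s[i+j]'(by omega)) :: s.drop (i + j + 1) :=
          List.drop_eq_getElem_cons (by omega)
        rw [hsuf, hdropc]
        simp only [List.map_cons, List.take_succ_cons]
        exact List.cons_eq_cons.mpr ⟨hhd1, htk2⟩
      exact prefixMatch_of_takes suf htk1 h2
  -- labels spell X
  have hlabels : L.map (fun K' => K'.headI) = X := by
    apply List.ext_getElem
    · simp [hLlen, hn]
    · intro j h1 h2
      simp only [List.getElem_map]
      rw [List.length_map, hLlen] at h1
      rw [hLget j h1]
      have hm := main (i + j) (by omega) (hrange j h1)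
      rw [hm.2.2]
      exact hcharX j h1
  -- headI of L
  have hLhead : L.headI = f i (by omega) := by
    have h0 : L[0]'(by omega) = f (i + 0) (by omega) := hLget 0 (by omega)
    have h1 : L[0]'(by omega) = L.headI := getElem_zero_eq_headI L (by omega)
    rw [← h1, h0]
    rfl
  -- node at position i is emb P.headI
  have hnode : (s[i]'(by omega)).2 = emb P.headI := by
    have h0 := hpair 0 (by omega)
    have hPh : P[0]'(by omega) = P.headI := by
      cases P with
      | nil => exact absurd rfl hPne
      | cons a t => simp
    rw [hPh] at h0
    simp only [Nat.add_zero] at h0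
    rw [h0]
  -- conclude
  simp only [PathGraph.locate, Set.mem_iUnion]
  refine ⟨f i (by omega), ⟨L, hchain, hmemkeys, hlabels, hLhead⟩, ?_⟩
  exact ⟨s, hs, i, hmain0.1, by omega, hnode⟩
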